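/- Let π g = Q_0·∂g + R_0·g with Q_0 ≠ 0 on K[x,y], and let T = Q_0 + (x - y)·R_0. Then π² = μ·π + ν·Id for constants μ, ν ∈ K if and only if ∂T = μ and ∂(R_0·sT) + R_0·sR_0 = ν. -/

import Mathlib

open MvPolynomial

/-- The automorphism of `K[x,y]` swapping the two variables. -/
noncomputable def s2 {K : Type*} [Field K] :
    MvPolynomial (Fin 2) K →ₐ[K] MvPolynomial (Fin 2) K :=
  rename (Equiv.swap 0 1)

lemma s2_s2 {K : Type*} [Field K] (p : MvPolynomial (Fin 2) K) :
    s2 (s2 p) = p := by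
  show (rename ⇑(Equiv.swap (0 : Fin 2) 1)) ((rename ⇑(Equiv.swap (0 : Fin 2) 1)) p) = p
  rw [rename_rename]
  have : (⇑(Equiv.swap (0 : Fin 2) 1) ∘ ⇑(Equiv.swap (0 : Fin 2) 1)) = id := by
    funext i; simp
  rw [this, rename_id, AlgHom.id_apply]

lemma s2_X0 {K : Type*} [Field K] :
    s2 (X 0 : MvPolynomial (Fin 2) K) = X 1 := by
  show (rename ⇑(Equiv.swap (0 : Fin 2) 1)) (X 0) = X 1
  rw [rename_X, Equiv.swap_apply_left]

lemma s2_X1 {K : Type*} [Field K] :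
    s2 (X 1 : MvPolynomial (Fin 2) K) = X 0 := by
  show (rename ⇑(Equiv.swap (0 : Fin 2) 1)) (X 1) = X 0
  rw [rename_X, Equiv.swap_apply_right]

lemma s2_sub_X {K : Type*} [Field K] :
    s2 (X 0 - X 1 : MvPolynomial (Fin 2) K) = X 1 - X 0 := by
  rw [map_sub, s2_X0, s2_X1]

lemma X_sub_ne {K : Type*} [Field K] :
    (X 0 - X 1 : MvPolynomial (Fin 2) K) ≠ 0 := by
  intro h
  have h2 := congrArg (aeval (fun i : Fin 2 => if i = 0 then (1 : K) else 0)) h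
  simp at h2

lemma X_add_ne {K : Type*} [Field K] :
    (X 0 + X 1 : MvPolynomial (Fin 2) K) ≠ 0 := by
  intro h
  have h2 := congrArg (aeval (fun i : Fin 2 => if i = 0 then (1 : K) else 0)) h
  simp at h2

/-- Let `π g = Q_0·∂g + R_0·g` with `Q_0 ≠ 0`, and `T = Q_0 + (x - y)·R_0`.
Then `π² = μ·π + ν·Id` if and only if `∂T = μ` and
`∂(R_0·sT) + R_0·sR_0 = ν`. -/
theorem hecke_condition {K : Type*} [Field K]
    (Q0 R0 : MvPolynomial (Fin 2) K) (hQ0 : Q0 ≠ 0) (μ ν : K)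
    (DT DRsT : MvPolynomial (Fin 2) K)
    (hDT : (X 0 - X 1) * DT
      = (Q0 + (X 0 - X 1) * R0) - s2 (Q0 + (X 0 - X 1) * R0))
    (hDRsT : (X 0 - X 1) * DRsT
      = R0 * s2 (Q0 + (X 0 - X 1) * R0)
        - s2 (R0 * s2 (Q0 + (X 0 - X 1) * R0))) :
    (∀ f Df Dg : MvPolynomial (Fin 2) K,
        (X 0 - X 1) * Df = f - s2 f →
        (X 0 - X 1) * Dg = (Q0 * Df + R0 * f) - s2 (Q0 * Df + R0 * f) →
        Q0 * Dg + R0 * (Q0 * Df + R0 * f)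
          = C μ * (Q0 * Df + R0 * f) + C ν * f)
      ↔ (DT = C μ ∧ DRsT + R0 * s2 R0 = C ν) := by
  have hΔ : (X 0 - X 1 : MvPolynomial (Fin 2) K) ≠ 0 := X_sub_ne
  -- expanded versions of hDT and hDRsT
  have h3 : (X 0 - X 1) * DT
      = (Q0 + (X 0 - X 1) * R0) - (s2 Q0 + (X 1 - X 0) * s2 R0) := by
    rw [hDT, map_add, map_mul, s2_sub_X]
  have h4 : (X 0 - X 1) * DRsT
      = R0 * (s2 Q0 + (X 1 - X 0) * s2 R0)
        - s2 R0 * (Q0 + (X 0 - X 1) * R0) := by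
    rw [hDRsT, map_mul, s2_s2, map_add, map_mul, s2_sub_X]
  -- the key identity: π² f = ∂T · π f + (∂(R₀ sT) + R₀ sR₀) · f
  have key : ∀ f Df Dg : MvPolynomial (Fin 2) K,
      (X 0 - X 1) * Df = f - s2 f →
      (X 0 - X 1) * Dg = (Q0 * Df + R0 * f) - s2 (Q0 * Df + R0 * f) →
      Q0 * Dg + R0 * (Q0 * Df + R0 * f)
        = DT * (Q0 * Df + R0 * f) + (DRsT + R0 * s2 R0) * f := by
    intro f Df Dg h1 h2
    have hsDf : s2 Df = Df := by
      have hs := congrArg s2 h1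
      simp only [map_mul, map_sub, s2_s2, s2_X0, s2_X1] at hs
      have h0 : (X 0 - X 1) * (s2 Df - Df) = 0 := by linear_combination -hs - h1
      rcases mul_eq_zero.mp h0 with h | h
      · exact absurd h hΔ
      · exact sub_eq_zero.mp h
    have h2' : (X 0 - X 1) * Dg
        = (Q0 * Df + R0 * f) - (s2 Q0 * Df + s2 R0 * s2 f) := by
      rw [h2, map_add, map_mul, map_mul, hsDf]
    apply mul_left_cancel₀ hΔ
    linear_combination Q0 * h2' - (Q0 * Df + R0 * f) * h3 - f * h4
      - Q0 * s2 R0 * h1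
  constructor
  · intro H
    -- instance 1: f = Δ², Df = 0, Dg = Δ·(R0 - sR0)
    set Δ : MvPolynomial (Fin 2) K := X 0 - X 1 with hΔdef
    have hf1 : Δ * (0 : MvPolynomial (Fin 2) K) = Δ * Δ - s2 (Δ * Δ) := by
      rw [map_mul, s2_sub_X, hΔdef]; ring
    have hg1 : Δ * (Δ * (R0 - s2 R0))
        = (Q0 * 0 + R0 * (Δ * Δ)) - s2 (Q0 * 0 + R0 * (Δ * Δ)) := by
      simp only [map_add, map_mul, map_zero, s2_sub_X, hΔdef]
      ring
    have E1 := H (Δ * Δ) 0 (Δ * (R0 - s2 R0)) hf1 hg1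
    have K1 := key (Δ * Δ) 0 (Δ * (R0 - s2 R0)) hf1 hg1
    have hA : DT * R0 + (DRsT + R0 * s2 R0) = C μ * R0 + C ν := by
      apply mul_left_cancel₀ (mul_ne_zero hΔ hΔ)
      linear_combination E1 - K1
    -- instance 2: f = x·Δ, Df = x + y, Dg = (x+y)·DT - y·R0 - x·sR0
    have hf2 : Δ * (X 0 + X 1) = X 0 * Δ - s2 (X 0 * Δ) := by
      rw [map_mul, s2_X0, s2_sub_X, hΔdef]; ring
    have hg2 : Δ * ((X 0 + X 1) * DT - X 1 * R0 - X 0 * s2 R0)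
        = (Q0 * (X 0 + X 1) + R0 * (X 0 * Δ))
          - s2 (Q0 * (X 0 + X 1) + R0 * (X 0 * Δ)) := by
      simp only [map_add, map_mul, s2_X0, s2_X1, s2_sub_X, hΔdef]
      linear_combination (X 0 + X 1) * h3
    have E2 := H (X 0 * Δ) (X 0 + X 1) ((X 0 + X 1) * DT - X 1 * R0 - X 0 * s2 R0)
      hf2 hg2
    have K2 := key (X 0 * Δ) (X 0 + X 1) ((X 0 + X 1) * DT - X 1 * R0 - X 0 * s2 R0)
      hf2 hg2
    have h5 : (X 0 + X 1) * (Q0 * (DT - C μ)) = 0 := by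
      linear_combination E2 - K2 - (X 0 * Δ) * hA
    have h6 := (mul_eq_zero.mp h5).resolve_left X_add_ne
    have h7 := (mul_eq_zero.mp h6).resolve_left hQ0
    have hμ : DT = C μ := sub_eq_zero.mp h7
    refine ⟨hμ, ?_⟩
    linear_combination hA - R0 * hμ
  · rintro ⟨e1, e2⟩ f Df Dg h1 h2
    rw [key f Df Dg h1 h2, e1, e2]
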